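/- For every positive integer d there exists a constant b > 0 with the following property: for every set N of unit vectors in EuclideanSpace ℝ (Fin d) such that ⟨n, m⟩ ≥ 0 for all n, m ∈ N, there exists a unit vector f ∈ EuclideanSpace ℝ (Fin d) with ⟨f, n⟩ > 1/b for every n ∈ N. -/

import Mathlib

open scoped RealInnerProductSpace

theorem exists_good_direction (d : ℕ) (hd : 0 < d) :
    ∃ b : ℝ, 0 < b ∧
      ∀ N : Set (EuclideanSpace ℝ (Fin d)),
        (∀ n ∈ N, ‖n‖ = 1) →
        (∀ n ∈ N, ∀ m ∈ N, 0 ≤ ⟪n, m⟫) →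
        ∃ f : EuclideanSpace ℝ (Fin d), ‖f‖ = 1 ∧ ∀ n ∈ N, 1 / b < ⟪f, n⟫ := by
  refine ⟨2 * Real.sqrt (d + 1), by positivity, fun N hN hNM => ?_⟩
  rcases N.eq_empty_or_nonempty with rfl | ⟨n₀, hn₀⟩
  · exact ⟨EuclideanSpace.single ⟨0, hd⟩ 1,
      by simp [EuclideanSpace.norm_single], fun n hn => hn.elim⟩
  -- Every point of the convex hull has norm² ≥ 1/(d+1).
  have key : ∀ x ∈ convexHull ℝ N, 1 / (d + 1) ≤ ‖x‖ ^ 2 := by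
    intro x hx
    obtain ⟨ι, hι, z, w, hz, hai, hw, hw1, hxe⟩ := eq_pos_convex_span_of_mem_convexHull hx
    have hcard : 0 < Fintype.card ι := by
      by_contra h
      have : IsEmpty ι := by
        rcases Nat.eq_zero_of_not_pos h with h0
        exact Fintype.card_eq_zero_iff.mp h0
      simp [Fintype.sum_empty] at hw1
    have hcard' : (Fintype.card ι : ℝ) ≤ d + 1 := by
      have h1 := hai.card_le_finrank_succ
      have h2 : Module.finrank ℝ (vectorSpan ℝ (Set.range z)) ≤ d :=
        le_trans (Submodule.finrank_le _) (by simp [finrank_euclideanSpace])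
      exact_mod_cast h1.trans (by omega)
    have hzN : ∀ i, z i ∈ N := fun i => hz ⟨i, rfl⟩
    -- expand the norm
    have hexp : ‖x‖ ^ 2 = ∑ i, ∑ j, w i * w j * ⟪z i, z j⟫ := by
      rw [← real_inner_self_eq_norm_sq, ← hxe, sum_inner]
      refine Finset.sum_congr rfl fun i _ => ?_
      rw [inner_sum]
      refine Finset.sum_congr rfl fun j _ => ?_
      rw [real_inner_smul_left, real_inner_smul_right]
      ring
    have hdiag : ∑ i, (w i) ^ 2 ≤ ‖x‖ ^ 2 := by
      rw [hexp]
      refine Finset.sum_le_sum fun i _ => ?_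
      have : (w i) ^ 2 = w i * w i * ⟪z i, z i⟫ := by
        rw [real_inner_self_eq_norm_sq, hN _ (hzN i)]; ring
      rw [this]
      refine Finset.single_le_sum (f := fun j => w i * w j * ⟪z i, z j⟫)
        (fun j _ => ?_) (Finset.mem_univ i)
      exact mul_nonneg (mul_nonneg (hw i).le (hw j).le) (hNM _ (hzN i) _ (hzN j))
    have hcheb : (1 : ℝ) ≤ (Fintype.card ι : ℝ) * ∑ i, (w i) ^ 2 := by
      have := sq_sum_le_card_mul_sum_sq (s := Finset.univ) (f := w)
      simpa [hw1] using this
    have h3 : 1 / ((d : ℝ) + 1) ≤ ∑ i, (w i) ^ 2 := by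
      rw [div_le_iff₀ (by positivity)]
      calc (1 : ℝ) ≤ (Fintype.card ι : ℝ) * ∑ i, (w i) ^ 2 := hcheb
        _ ≤ ((d : ℝ) + 1) * ∑ i, (w i) ^ 2 := by
            refine mul_le_mul_of_nonneg_right hcard' ?_
            positivity
        _ = (∑ i, (w i) ^ 2) * ((d : ℝ) + 1) := by ring
    exact h3.trans hdiag
  -- pass to the closure
  set K := closure (convexHull ℝ N) with hK
  have keyK : ∀ x ∈ K, 1 / ((d : ℝ) + 1) ≤ ‖x‖ ^ 2 := by
    intro x hx
    have hcl : K ⊆ {y : EuclideanSpace ℝ (Fin d) | 1 / ((d : ℝ) + 1) ≤ ‖y‖ ^ 2} := by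
      apply closure_minimal
      · intro y hy; exact key y hy
      · have : Continuous fun y : EuclideanSpace ℝ (Fin d) => ‖y‖ ^ 2 := by continuity
        exact isClosed_le continuous_const this
    exact hcl hx
  have hKconv : Convex ℝ K := (convex_convexHull ℝ N).closure
  have hKne : K.Nonempty := ⟨n₀, subset_closure (subset_convexHull ℝ N hn₀)⟩
  obtain ⟨v, hvK, hv⟩ := exists_norm_eq_iInf_of_complete_convex hKne
    isClosed_closure.isComplete hKconv (0 : EuclideanSpace ℝ (Fin d))
  rw [norm_eq_iInf_iff_real_inner_le_zero hKconv hvK] at hv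
  have hvnorm : 1 / ((d : ℝ) + 1) ≤ ‖v‖ ^ 2 := keyK v hvK
  have hvpos : 0 < ‖v‖ := by
    by_contra h
    push_neg at h
    have : ‖v‖ = 0 := le_antisymm h (norm_nonneg v)
    rw [this] at hvnorm
    norm_num at hvnorm
    linarith [hvnorm]
  have hlow : ∀ n ∈ N, ‖v‖ ^ 2 ≤ ⟪v, n⟫ := by
    intro n hn
    have hnK : n ∈ K := subset_closure (subset_convexHull ℝ N hn)
    have := hv n hnK
    have hcalc : ⟪(0 : EuclideanSpace ℝ (Fin d)) - v, n - v⟫ = -⟪v, n⟫ + ‖v‖ ^ 2 := by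
      rw [inner_sub_left, inner_sub_right, inner_sub_right, real_inner_self_eq_norm_sq,
        inner_zero_left, inner_zero_left]
      ring
    rw [hcalc] at this
    linarith
  refine ⟨‖v‖⁻¹ • v, ?_, ?_⟩
  · rw [norm_smul, norm_inv, norm_norm, inv_mul_cancel₀ hvpos.ne']
  · intro n hn
    have : ⟪(‖v‖⁻¹ • v : EuclideanSpace ℝ (Fin d)), n⟫ = ‖v‖⁻¹ * ⟪v, n⟫ := real_inner_smul_left v n _
    rw [this]
    have h1 : ‖v‖ ≤ ‖v‖⁻¹ * ⟪v, n⟫ := by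
      rw [← sub_nonneg]
      have heq2 : ‖v‖⁻¹ * ⟪v, n⟫ - ‖v‖ = ‖v‖⁻¹ * (⟪v, n⟫ - ‖v‖ ^ 2) := by
        field_simp
      rw [heq2]
      exact mul_nonneg (by positivity) (by linarith [hlow n hn])
    have h2 : 1 / (2 * Real.sqrt (d + 1)) < ‖v‖ := by
      have hsq : Real.sqrt (1 / ((d : ℝ) + 1)) ≤ ‖v‖ := by
        have := Real.sqrt_le_sqrt hvnorm
        rwa [Real.sqrt_sq (norm_nonneg v)] at this
      have hs : (0 : ℝ) < Real.sqrt (d + 1) := by positivity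
      have heq : Real.sqrt (1 / ((d : ℝ) + 1)) = 1 / Real.sqrt ((d : ℝ) + 1) := by
        rw [one_div, one_div, Real.sqrt_inv]
      calc 1 / (2 * Real.sqrt (d + 1)) < 1 / Real.sqrt ((d : ℝ) + 1) := by
            apply div_lt_div_of_pos_left one_pos hs
            linarith
        _ ≤ ‖v‖ := heq ▸ hsq
    linarith
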